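/- arXiv:1102.3093 — 2 statements merged into one kernel-verified Lean document; each statement's English description precedes it below -/
import Mathlib

section
/- Let k ≥ 1 and let L ⊆ Σ* be recognized by a realtime deterministic automaton with k blind counters, given concretely by a finite state set Q, transition function δ : Q × Σ → Q, counter-update function c : Q → ℤᵏ (applied upon entering a state), initial state q₀, and accepting set Q_a ⊆ Q; that is, w = w_1 … w_n belongs to L if and only if, for the run q_i = δ(q_{i−1}, w_i), the final state q_n lies in Q_a and the total counter vector ∑_{i=1}^{n} c(q_i) equals 0 ∈ ℤᵏ. Then there exists a generalized finite automaton G over Σ such that f_G(w) = 0 for every w ∈ L and f_G(w) > 0 for every w ∉ L. (Equivalently, the complement of L belongs to NQAL, the class of languages definable by a GFA whose accepting value is positive exactly on members.) -/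
open Matrix

set_option linter.unusedSectionVars false


namespace NQALProof
open Classical
variable {Q : Type} [Fintype Q] {α : Type} {k : ℕ}

def sVal (δ : Q → α → Q) (c : Q → Fin k → ℤ) (q₀ : Q) (w : List α) (l : Fin k) : ℤ :=
  ((List.scanl δ q₀ w).tail.map fun r => c r l).sum

lemma scanl_concat (δ : Q → α → Q) (q : Q) (w : List α) (σ : α) :
    List.scanl δ q (w ++ [σ]) = List.scanl δ q w ++ [List.foldl δ q (w ++ [σ])] := by
  induction w generalizing q with
  | nil => simp
  | cons a w ih => simp [List.scanl_cons, ih]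

lemma sVal_concat (δ : Q → α → Q) (c : Q → Fin k → ℤ) (q₀ : Q) (w : List α) (σ : α)
    (l : Fin k) :
    sVal δ c q₀ (w ++ [σ]) l = sVal δ c q₀ w l + c (δ (List.foldl δ q₀ w) σ) l := by
  have hne : List.scanl δ q₀ w ≠ [] := by cases w <;> simp [List.scanl_cons]
  simp [sVal, scanl_concat, List.tail_append, hne]

noncomputable def xvec (δ : Q → α → Q) (c : Q → Fin k → ℤ) (q₀ : Q) (w : List α) :
    Q × Fin k × Fin 3 → ℝ :=
  fun i => if i.1 = List.foldl δ q₀ w then (sVal δ c q₀ w i.2.1 : ℝ) ^ (i.2.2 : ℕ) else 0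

noncomputable def transM (δ : Q → α → Q) (c : Q → Fin k → ℤ) (σ : α) :
    Matrix (Q × Fin k × Fin 3) (Q × Fin k × Fin 3) ℝ :=
  Matrix.of fun i i' =>
    if δ i'.1 σ = i.1 ∧ i'.2.1 = i.2.1 then
      ((i.2.2 : ℕ).choose (i'.2.2 : ℕ) : ℝ) * (c i.1 i.2.1 : ℝ) ^ ((i.2.2 : ℕ) - (i'.2.2 : ℕ))
    else 0

lemma step (δ : Q → α → Q) (c : Q → Fin k → ℤ) (q₀ : Q) (w : List α) (σ : α) :
    transM δ c σ *ᵥ xvec δ c q₀ w = xvec δ c q₀ (w ++ [σ]) := by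
  funext i
  obtain ⟨q', l, j⟩ := i
  simp only [mulVec, dotProduct, Fintype.sum_prod_type, transM, xvec, Matrix.of_apply]
  rw [Finset.sum_eq_single (List.foldl δ q₀ w)]
  · by_cases h : δ (List.foldl δ q₀ w) σ = q'
    · simp only [h, true_and, if_pos rfl]
      rw [Finset.sum_eq_single l]
      · have hfold : List.foldl δ q₀ (w ++ [σ]) = q' := by simp [h]
        simp only [if_pos rfl, hfold, sVal_concat, h]
        push_cast
        fin_cases j <;> simp [Fin.sum_univ_three] <;> ring
      · intro l' _ hl'
        simp [hl']
      · intro h'; exact absurd (Finset.mem_univ _) h'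
    · have hfold : List.foldl δ q₀ (w ++ [σ]) ≠ q' := by simp [h]
      have h2 : ¬ q' = δ (List.foldl δ q₀ w) σ := fun hh => h hh.symm
      simp [h, h2]
  · intro q _ hq
    simp [hq]
  · intro h'; exact absurd (Finset.mem_univ _) h'

lemma run (δ : Q → α → Q) (c : Q → Fin k → ℤ) (q₀ : Q) (w : List α) :
    (w.reverse.map (transM δ c)).prod *ᵥ xvec δ c q₀ [] = xvec δ c q₀ w := by
  induction w using List.reverseRecOn with
  | nil => simp [Matrix.one_mulVec]
  | append_singleton u σ ih =>
      rw [List.reverse_append, List.reverse_singleton, List.singleton_append, List.map_cons,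
        List.prod_cons, ← Matrix.mulVec_mulVec, ih, step]

/-- the final vector -/
noncomputable def fvec (hk : 1 ≤ k) (Qa : Set Q) : Q × Fin k × Fin 3 → ℝ :=
  fun i => if (i.2.2 : ℕ) = 2 then 1
    else if (i.2.2 : ℕ) = 0 ∧ i.2.1 = ⟨0, hk⟩ ∧ i.1 ∉ Qa then 1 else 0

lemma dot (hk : 1 ≤ k) (Qa : Set Q) (δ : Q → α → Q) (c : Q → Fin k → ℤ) (q₀ : Q)
    (w : List α) :
    fvec hk Qa ⬝ᵥ xvec δ c q₀ w =
      (∑ l : Fin k, (sVal δ c q₀ w l : ℝ) ^ 2) +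
        (if List.foldl δ q₀ w ∈ Qa then 0 else 1) := by
  simp only [dotProduct, Fintype.sum_prod_type, fvec, xvec]
  rw [Finset.sum_eq_single (List.foldl δ q₀ w)]
  · by_cases hq : List.foldl δ q₀ w ∈ Qa
    · simp [hq, Fin.sum_univ_three, Finset.sum_add_distrib]
    · rw [Finset.sum_eq_add_sum_sdiff_singleton_of_mem (Finset.mem_univ (⟨0, hk⟩ : Fin k))]
      simp [hq, Fin.sum_univ_three, Finset.sum_add_distrib]
      ring
  · intro q _ hq
    simp [hq]
  · intro h'; exact absurd (Finset.mem_univ _) h'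



theorem complement_of_rtDkBCA_in_NQAL' {Q : Type} [Fintype Q] {α : Type}
    {k : ℕ} (hk : 1 ≤ k) (δ : Q → α → Q) (c : Q → Fin k → ℤ)
    (q₀ : Q) (Qa : Set Q) :
    ∃ (n : ℕ) (A : α → Matrix (Fin n) (Fin n) ℝ) (v0 f : Fin n → ℝ),
      ∀ w : List α,
        ((w.foldl δ q₀ ∈ Qa ∧
            ∀ l : Fin k, (((List.scanl δ q₀ w).tail.map fun r => c r l).sum) = 0) →
          f ⬝ᵥ ((w.reverse.map A).prod *ᵥ v0) = 0) ∧
        (¬ (w.foldl δ q₀ ∈ Qa ∧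
            ∀ l : Fin k, (((List.scanl δ q₀ w).tail.map fun r => c r l).sum) = 0) →
          f ⬝ᵥ ((w.reverse.map A).prod *ᵥ v0) > 0) := by
  classical
  let e : (Q × Fin k × Fin 3) ≃ Fin (Fintype.card (Q × Fin k × Fin 3)) := Fintype.equivFin _
  refine ⟨Fintype.card (Q × Fin k × Fin 3),
    fun σ => reindexAlgEquiv ℝ ℝ e (transM δ c σ),
    xvec δ c q₀ [] ∘ e.symm, fvec hk Qa ∘ e.symm, ?_⟩
  intro w
  have key : (fvec hk Qa ∘ e.symm) ⬝ᵥ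
      ((w.reverse.map (fun σ => reindexAlgEquiv ℝ ℝ e (transM δ c σ))).prod *ᵥ
        (xvec δ c q₀ [] ∘ e.symm)) =
      (∑ l : Fin k, (sVal δ c q₀ w l : ℝ) ^ 2) +
        (if List.foldl δ q₀ w ∈ Qa then 0 else 1) := by
    have hp : (w.reverse.map (fun σ => reindexAlgEquiv ℝ ℝ e (transM δ c σ))).prod
        = reindexAlgEquiv ℝ ℝ e ((w.reverse.map (transM δ c)).prod) := by
      rw [map_list_prod, List.map_map]
      rfl
    rw [hp, Matrix.reindexAlgEquiv_apply, Matrix.reindex_apply,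
      Matrix.submatrix_mulVec_equiv]
    have hv : (xvec δ c q₀ [] ∘ e.symm) ∘ (e.symm).symm = xvec δ c q₀ [] := by
      funext i; simp
    rw [hv, comp_equiv_dotProduct_comp_equiv, run, dot]
  rw [key]
  constructor
  · rintro ⟨hin, hz⟩
    have hz' : ∀ l : Fin k, sVal δ c q₀ w l = 0 := hz
    simp [hin, hz']
  · intro hnot
    by_cases hin : List.foldl δ q₀ w ∈ Qa
    · have hz : ∃ l : Fin k, sVal δ c q₀ w l ≠ 0 := by
        by_contra hc
        push_neg at hc
        exact hnot ⟨hin, hc⟩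
      obtain ⟨l, hl⟩ := hz
      have hpos : 0 < ∑ l : Fin k, (sVal δ c q₀ w l : ℝ) ^ 2 := by
        refine Finset.sum_pos' (fun i _ => sq_nonneg _) ⟨l, Finset.mem_univ _, ?_⟩
        have : (sVal δ c q₀ w l : ℝ) ≠ 0 := Int.cast_ne_zero.mpr hl
        positivity
      simp only [hin, if_true, add_zero]
      exact hpos
    · have h1 : (0:ℝ) ≤ ∑ l : Fin k, (sVal δ c q₀ w l : ℝ) ^ 2 :=
        Finset.sum_nonneg fun i _ => sq_nonneg _
      simp only [hin, if_false]
      linarith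

end NQALProof

/-- **The complement of every rtDkBCA language is in NQAL.**
Let `k ≥ 1` and let `L ⊆ Σ*` be recognized by a realtime deterministic automaton with
`k` blind counters, given by a finite state set `Q`, transition function `δ : Q × Σ → Q`,
counter-update function `c : Q → ℤᵏ` (applied upon entering a state), initial state `q₀`
and accepting set `Q_a`:  `w = w₁ … w_n ∈ L` iff the final state `q_n` of the run
`q_i = δ q_{i-1} w_i` lies in `Q_a` and the total counter vector `∑ i, c (q_i)` is `0`.
Then there is a generalized finite automaton `G` over `Σ` (accepting value
`f_G(w) = f · A_{w_m} ⋯ A_{w_1} · v0`) with `f_G(w) = 0` for every `w ∈ L` and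
`f_G(w) > 0` for every `w ∉ L`. -/
theorem complement_of_rtDkBCA_in_NQAL {Q : Type} [Fintype Q] {α : Type}
    {k : ℕ} (hk : 1 ≤ k) (δ : Q → α → Q) (c : Q → Fin k → ℤ)
    (q₀ : Q) (Qa : Set Q) :
    ∃ (n : ℕ) (A : α → Matrix (Fin n) (Fin n) ℝ) (v0 f : Fin n → ℝ),
      ∀ w : List α,
        ((w.foldl δ q₀ ∈ Qa ∧
            ∀ l : Fin k, (((List.scanl δ q₀ w).tail.map fun r => c r l).sum) = 0) →
          f ⬝ᵥ ((w.reverse.map A).prod *ᵥ v0) = 0) ∧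
        (¬ (w.foldl δ q₀ ∈ Qa ∧
            ∀ l : Fin k, (((List.scanl δ q₀ w).tail.map fun r => c r l).sum) = 0) →
          f ⬝ᵥ ((w.reverse.map A).prod *ᵥ v0) > 0) := by
  exact NQALProof.complement_of_rtDkBCA_in_NQAL' hk δ c q₀ Qa
end

section
/- Let k ≥ 1, let Q be a finite state set, δ : Q × Σ → Q a deterministic transition function, c : Q → ℤᵏ a counter-update function, q₀ an initial state, Q_a ⊆ Q an accepting set, and let p_1, …, p_k be pairwise distinct primes. For a word w = w_1 … w_n let q_i = δ(q_{i−1}, w_i) be the run from q₀ and C(w) = ∑_{i=1}^{n} c(q_i) ∈ ℤᵏ the total counter update. Then there exists a generalized finite automaton G over Σ of dimension |Q| + 1 such that for every word w ∈ Σ*: f_G(w) = (∏_{l=1}^{k} (p_l)^{C(w)[l]}) − 1 if the final state q_n of the run belongs to Q_a, and f_G(w) = −1 if q_n ∉ Q_a. -/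
open Matrix

private lemma scanl_append_singleton {α β : Type*} (f : β → α → β) :
    ∀ (l : List α) (b : β) (a : α),
      List.scanl f b (l ++ [a]) = List.scanl f b l ++ [List.foldl f b (l ++ [a])] := by
  intro l
  induction l with
  | nil => intro b a; simp [List.scanl]
  | cons x xs ih =>
    intro b a
    simp [List.scanl_cons, ih (f b x) a]

/-- **A GFA of dimension `|Q| + 1` computing `∏ l, p_l^{C(w)_l} − 1` on accepted runs.**
Let `k ≥ 1`, let `Q` be a finite state set, `δ : Q × Σ → Q` a deterministic transition
function, `c : Q → ℤᵏ` a counter-update function (applied upon entering a state),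
`q₀` an initial state, `Q_a ⊆ Q` an accepting set, and `p 1, …, p k` pairwise distinct
primes.  For a word `w = w₁ … w_n` let `q_i = δ q_{i-1} w_i` be the run from `q₀` and
`C(w) = ∑ i, c (q_i) ∈ ℤᵏ`.  Then there is a generalized finite automaton `G` over `Σ`
of dimension `|Q| + 1` (accepting value `f_G(w) = f · A_{w_m} ⋯ A_{w_1} · v0`) such
that for every word `w`: `f_G(w) = (∏ l, (p l) ^ (C(w) l)) - 1` if the final state
`q_n` of the run belongs to `Q_a`, and `f_G(w) = -1` if `q_n ∉ Qa`. -/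
theorem exists_gfa_counter_product_minus_one {Q : Type} [Fintype Q] {α : Type}
    {k : ℕ} (hk : 1 ≤ k) (δ : Q → α → Q) (c : Q → Fin k → ℤ)
    (q₀ : Q) (Qa : Set Q) (p : Fin k → ℕ)
    (hp : ∀ l, Nat.Prime (p l)) (hdist : Function.Injective p) :
    ∃ (A : α → Matrix (Fin (Fintype.card Q + 1)) (Fin (Fintype.card Q + 1)) ℝ)
      (v0 f : Fin (Fintype.card Q + 1) → ℝ),
      ∀ w : List α,
        (w.foldl δ q₀ ∈ Qa →
          f ⬝ᵥ ((w.reverse.map A).prod *ᵥ v0) =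
            (∏ l, (p l : ℝ) ^ (((List.scanl δ q₀ w).tail.map fun r => c r l).sum)) - 1) ∧
        (w.foldl δ q₀ ∉ Qa →
          f ⬝ᵥ ((w.reverse.map A).prod *ᵥ v0) = -1) := by
  classical
  have hcard : Fintype.card (Option Q) = Fintype.card Q + 1 := by simp
  let eqv : Option Q ≃ Fin (Fintype.card Q + 1) := Fintype.equivFinOfCardEq hcard
  have hpne : ∀ l, (p l : ℝ) ≠ 0 := fun l => by
    exact_mod_cast (hp l).ne_zero
  let μ : Q → ℝ := fun q => ∏ l, (p l : ℝ) ^ (c q l)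
  let B : α → Matrix (Option Q) (Option Q) ℝ := fun a i j =>
    match i, j with
    | none, none => 1
    | some q', some q => if q' = δ q a then μ q' else 0
    | _, _ => 0
  let v0' : Option Q → ℝ := fun i => i.elim 1 (fun q => if q = q₀ then 1 else 0)
  let f' : Option Q → ℝ := fun i => i.elim (-1) (fun q => if q ∈ Qa then 1 else 0)
  -- the value ∏ l, p l ^ C(w) l
  let P : List α → ℝ := fun w =>
    ∏ l, (p l : ℝ) ^ (((List.scanl δ q₀ w).tail.map fun r => c r l).sum)
  have hPapp : ∀ (w : List α) (a : α),
      P (w ++ [a]) = μ (List.foldl δ q₀ (w ++ [a])) * P w := by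
    intro w a
    have h := scanl_append_singleton δ w q₀ a
    have htail : (List.scanl δ q₀ (w ++ [a])).tail
        = (List.scanl δ q₀ w).tail ++ [List.foldl δ q₀ (w ++ [a])] := by
      rw [h]
      cases hw : List.scanl δ q₀ w with
      | nil => exact absurd hw (List.ne_nil_of_length_pos (by simp [List.length_scanl]))
      | cons x xs => simp
    simp only [P, htail, List.map_append, List.sum_append, List.map_cons, List.map_nil,
      List.sum_cons, List.sum_nil, add_zero]
    rw [← Finset.prod_mul_distrib]
    refine Finset.prod_congr rfl fun l _ => ?_
    rw [zpow_add₀ (hpne l), mul_comm]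
  -- the key invariant
  have key : ∀ w : List α,
      ((w.reverse.map B).prod) *ᵥ v0' =
        fun i => i.elim 1 (fun q => if q = w.foldl δ q₀ then P w else 0) := by
    intro w
    induction w using List.reverseRecOn with
    | nil =>
      funext i
      cases i with
      | none => simp [v0', P]
      | some q => simp [v0', P, List.scanl]
    | append_singleton w a ih =>
      have hrev : (w ++ [a]).reverse.map B = B a :: w.reverse.map B := by simp
      rw [hrev, List.prod_cons, ← Matrix.mulVec_mulVec, ih]
      funext i
      cases i with
      | none =>
        simp only [Matrix.mulVec, dotProduct]
        rw [Fintype.sum_option]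
        simp [B]
      | some q' =>
        simp only [Matrix.mulVec, dotProduct]
        rw [Fintype.sum_option]
        have h1 : (B a (some q') none : ℝ) = 0 := rfl
        rw [h1]
        simp only [zero_mul, zero_add]
        have h2 : ∀ q : Q, B a (some q') (some q) *
            (Option.elim (some q) (1:ℝ) fun r => if r = w.foldl δ q₀ then P w else 0)
            = if q = w.foldl δ q₀ then (if q' = δ q a then μ q' * P w else 0) else 0 := by
          intro q
          simp only [Option.elim, B]
          by_cases hq : q = w.foldl δ q₀ <;> by_cases hq' : q' = δ q a <;>
            simp [hq, hq']
        simp only [h2]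
        rw [Finset.sum_ite_eq' Finset.univ (w.foldl δ q₀)
          (fun q => if q' = δ q a then μ q' * P w else 0)]
        simp only [Finset.mem_univ, if_true, Option.elim]
        have hfold : (w ++ [a]).foldl δ q₀ = δ (w.foldl δ q₀) a := by simp
        rw [hfold, hPapp w a, hfold]
        by_cases hq' : q' = δ (w.foldl δ q₀) a <;> simp [hq']
  -- transport to Fin (card Q + 1)
  refine ⟨fun a => (Matrix.reindexAlgEquiv ℝ ℝ eqv) (B a), v0' ∘ eqv.symm, f' ∘ eqv.symm,
    fun w => ?_⟩
  have hprod : ((w.reverse.map fun a => (Matrix.reindexAlgEquiv ℝ ℝ eqv) (B a)).prod)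
      = (Matrix.reindexAlgEquiv ℝ ℝ eqv) ((w.reverse.map B).prod) := by
    have : (fun a => (Matrix.reindexAlgEquiv ℝ ℝ eqv) (B a))
        = (Matrix.reindexAlgEquiv ℝ ℝ eqv) ∘ B := rfl
    rw [this, ← List.map_map, ← map_list_prod (Matrix.reindexAlgEquiv ℝ ℝ eqv)]
  have hmain : (f' ∘ eqv.symm) ⬝ᵥ
      (((w.reverse.map fun a => (Matrix.reindexAlgEquiv ℝ ℝ eqv) (B a)).prod) *ᵥ (v0' ∘ eqv.symm))
      = -1 + (if w.foldl δ q₀ ∈ Qa then P w else 0) := by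
    rw [hprod]
    have : ((Matrix.reindexAlgEquiv ℝ ℝ eqv) ((w.reverse.map B).prod)) *ᵥ (v0' ∘ eqv.symm)
        = (((w.reverse.map B).prod) *ᵥ v0') ∘ eqv.symm := by
      rw [Matrix.reindexAlgEquiv_apply, Matrix.reindex_apply,
        Matrix.submatrix_mulVec_equiv]
      have hv : (v0' ∘ ⇑eqv.symm) ∘ ⇑eqv.symm.symm = v0' := by
        funext i; simp
      rw [hv]
    rw [this, key w]
    simp only [dotProduct, Function.comp]
    rw [Equiv.sum_comp eqv.symm
      (fun j : Option Q => f' j *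
        (Option.elim j 1 fun q => if q = w.foldl δ q₀ then P w else 0))]
    rw [Fintype.sum_option]
    simp only [f', Option.elim]
    rw [Finset.sum_congr rfl (fun q _ => show
      (if q ∈ Qa then (1:ℝ) else 0) * (if q = w.foldl δ q₀ then P w else 0)
      = if q = w.foldl δ q₀ then (if q ∈ Qa then P w else 0) else 0 from by
        by_cases h1 : q ∈ Qa <;> by_cases h2 : q = w.foldl δ q₀ <;> simp [h1, h2])]
    rw [Finset.sum_ite_eq' Finset.univ (w.foldl δ q₀) (fun q => if q ∈ Qa then P w else 0)]
    simp
  constructor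
  · intro hacc
    rw [hmain]
    simp [hacc, P]
    ring
  · intro hrej
    rw [hmain]
    simp [hrej]
end
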